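/- In the standard MV-algebra [0,1] (with x ⊕ y = min(1,x+y) and x* = 1-x), the identity (x₁·z₁ ⊖ y₁·z₂) ⊓ (x₂·z₂ ⊖ y₂·z₁) ⊓ (y₁·y₂ ⊖ x₁·x₂) = 0 holds for all x₁, x₂, y₁, y₂, z₁, z₂ ∈ [0,1], where a ⊖ b = max(0, a−b), · is real multiplication, and ⊓ is minimum. -/
import Mathlib

/-- In the standard MV-algebra `[0,1]`,
`(x₁·z₁ ⊖ y₁·z₂) ⊓ (x₂·z₂ ⊖ y₂·z₁) ⊓ (y₁·y₂ ⊖ x₁·x₂) = 0`,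
where `a ⊖ b = max 0 (a - b)`. -/
theorem stmt_2 (x₁ x₂ y₁ y₂ z₁ z₂ : ℝ)
    (hx₁ : x₁ ∈ Set.Icc (0:ℝ) 1) (hx₂ : x₂ ∈ Set.Icc (0:ℝ) 1)
    (hy₁ : y₁ ∈ Set.Icc (0:ℝ) 1) (hy₂ : y₂ ∈ Set.Icc (0:ℝ) 1)
    (hz₁ : z₁ ∈ Set.Icc (0:ℝ) 1) (hz₂ : z₂ ∈ Set.Icc (0:ℝ) 1) :
    min (min (max 0 (x₁ * z₁ - y₁ * z₂)) (max 0 (x₂ * z₂ - y₂ * z₁)))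
      (max 0 (y₁ * y₂ - x₁ * x₂)) = 0 := by
  obtain ⟨hx₁0, hx₁1⟩ := hx₁
  obtain ⟨hx₂0, hx₂1⟩ := hx₂
  obtain ⟨hy₁0, hy₁1⟩ := hy₁
  obtain ⟨hy₂0, hy₂1⟩ := hy₂
  obtain ⟨hz₁0, hz₁1⟩ := hz₁
  obtain ⟨hz₂0, hz₂1⟩ := hz₂
  rcases le_or_gt (x₁ * z₁) (y₁ * z₂) with h1 | h1
  · simp [min_eq_left, max_eq_left (sub_nonpos.mpr h1)]
  rcases le_or_gt (x₂ * z₂) (y₂ * z₁) with h2 | h2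
  · simp [max_eq_left (sub_nonpos.mpr h2)]
  have hz₁p : 0 < z₁ := by nlinarith
  have hz₂p : 0 < z₂ := by nlinarith
  have h3 : y₁ * y₂ ≤ x₁ * x₂ := by
    have key : y₁ * z₂ * (y₂ * z₁) < x₁ * z₁ * (x₂ * z₂) := mul_lt_mul' h1.le h2 (mul_nonneg hy₂0 hz₁0) ((mul_nonneg hy₁0 hz₂0).trans_lt h1)
    nlinarith [mul_pos hz₁p hz₂p]
  simp [max_eq_left (sub_nonpos.mpr h3)]
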